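/- Let α ∈ (0,1). Let G₀ and G be Borel probability measures on ℝ with finite second moments. Let m(G) and m(G₀) denote their means, let (ℓ,u) be any pair consisting of an α/2-quantile and a (1−α/2)-quantile of G, and let (ℓ₀,u₀) be such a pair for G₀. Then ∫ [(m(G) − τ)² + S_int(ℓ,u;τ)] dG₀(τ) ≥ ∫ [(m(G₀) − τ)² + S_int(ℓ₀,u₀;τ)] dG₀(τ). -/

import Mathlib

open MeasureTheory Set

/-- The interval score of the interval `[ℓ, u]` at observation `τ`, at level `α`. -/
noncomputable def Sint (α ℓ u τ : ℝ) : ℝ :=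
  (u - ℓ) + (2 / α) * (ℓ - τ) * (if τ < ℓ then 1 else 0)
    + (2 / α) * (τ - u) * (if u < τ then 1 else 0)

/-- `x` is a `q`-quantile of the Borel probability measure `G` on `ℝ`. -/
def IsQuantile (G : Measure ℝ) (q x : ℝ) : Prop :=
  q ≤ (G (Iic x)).toReal ∧ 1 - q ≤ (G (Ici x)).toReal

/-- The pinball (quantile) loss at level `q`. -/
noncomputable def pinLoss (q x τ : ℝ) : ℝ := max (x - τ) 0 - q * (x - τ)

lemma integrable_max_sub (G : Measure ℝ) [IsFiniteMeasure G] (hid : Integrable id G) (x : ℝ) :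
    Integrable (fun τ => max (x - τ) 0) G := by
  refine Integrable.mono' ((integrable_const |x|).add hid.abs) ?_ ?_
  · exact (Continuous.max (by continuity) continuous_const).aestronglyMeasurable
  · refine Filter.Eventually.of_forall fun τ => ?_
    have h0 : (0:ℝ) ≤ max (x - τ) 0 := le_max_right _ _
    rw [Real.norm_eq_abs, abs_of_nonneg h0]
    have : x - τ ≤ |x| + |τ| := by
      calc x - τ ≤ |x - τ| := le_abs_self _
      _ ≤ |x| + |τ| := abs_sub _ _
    simpa [id] using max_le this (by positivity)

lemma integrable_pinLoss (G : Measure ℝ) [IsFiniteMeasure G] (hid : Integrable id G)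
    (q x : ℝ) : Integrable (pinLoss q x) G := by
  have h1 := integrable_max_sub G hid x
  have h2 : Integrable (fun τ => q * (x - τ)) G :=
    (((integrable_const x).sub hid).const_mul q)
  exact h1.sub h2

lemma prob_Iio_le (G : Measure ℝ) [IsProbabilityMeasure G] (q x : ℝ)
    (h : 1 - q ≤ (G (Ici x)).toReal) : (G (Iio x)).toReal ≤ q := by
  have hcompl : G (Iio x) = 1 - G (Ici x) := by
    rw [← compl_Ici, measure_compl measurableSet_Ici (measure_ne_top _ _), measure_univ]
  have hle : G (Ici x) ≤ 1 := prob_le_one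
  rw [hcompl, ENNReal.toReal_sub_of_le hle (by simp)]
  simp only [ENNReal.toReal_one]
  linarith

/-- Propriety of the pinball loss: expectation is minimised at a `q`-quantile. -/
lemma pinball_le (G : Measure ℝ) [IsProbabilityMeasure G] (hid : Integrable id G)
    (q x x₀ : ℝ) (hx₀ : IsQuantile G q x₀) :
    ∫ τ, pinLoss q x₀ τ ∂G ≤ ∫ τ, pinLoss q x τ ∂G := by
  obtain ⟨h1, h2⟩ := hx₀
  have hI0 := integrable_pinLoss G hid q x₀
  have hI := integrable_pinLoss G hid q x
  rcases le_total x₀ x with hle | hle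
  · set s : Set ℝ := Iic x₀ with hs
    have hms : MeasurableSet s := measurableSet_Iic
    have hind : Integrable (fun τ => (x - x₀) * s.indicator (fun _ => (1:ℝ)) τ
        - q * (x - x₀)) G := by
      exact (((integrable_const (1:ℝ)).indicator hms).const_mul _).sub (integrable_const _)
    have hpt : ∀ τ, (x - x₀) * s.indicator (fun _ => (1:ℝ)) τ - q * (x - x₀) + pinLoss q x₀ τ
        ≤ pinLoss q x τ := by
      intro τ
      by_cases hτ : τ ≤ x₀
      · have : max (x - τ) 0 = x - τ := max_eq_left (by linarith)
        have h0 : max (x₀ - τ) 0 = x₀ - τ := max_eq_left (by linarith)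
        simp [pinLoss, hs, indicator_of_mem (mem_Iic.2 hτ), this, h0]
        ring_nf
        try linarith
      · have h0 : max (x₀ - τ) 0 = 0 := max_eq_right (by push_neg at hτ; linarith)
        have h1' : 0 ≤ max (x - τ) 0 := le_max_right _ _
        simp [pinLoss, hs, indicator_of_notMem (fun h => hτ (mem_Iic.1 h)), h0]
        nlinarith
    have hmono : ∫ τ, ((x - x₀) * s.indicator (fun _ => (1:ℝ)) τ - q * (x - x₀)
        + pinLoss q x₀ τ) ∂G ≤ ∫ τ, pinLoss q x τ ∂G :=
      integral_mono (hind.add hI0) hI hpt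
    rw [integral_add hind hI0, integral_sub (((integrable_const (1:ℝ)).indicator hms).const_mul _)
      (integrable_const _), integral_const_mul, integral_indicator_const (1:ℝ) hms,
      integral_const] at hmono
    simp only [measure_univ, ENNReal.toReal_one, smul_eq_mul, one_smul, mul_one, probReal_univ,
      measureReal_def] at hmono
    nlinarith
  · set s : Set ℝ := Iio x₀ with hs
    have hms : MeasurableSet s := measurableSet_Iio
    have hind : Integrable (fun τ => (x - x₀) * s.indicator (fun _ => (1:ℝ)) τ
        - q * (x - x₀)) G := by
      exact (((integrable_const (1:ℝ)).indicator hms).const_mul _).sub (integrable_const _)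
    have hpt : ∀ τ, (x - x₀) * s.indicator (fun _ => (1:ℝ)) τ - q * (x - x₀) + pinLoss q x₀ τ
        ≤ pinLoss q x τ := by
      intro τ
      by_cases hτ : τ < x₀
      · have h0 : max (x₀ - τ) 0 = x₀ - τ := max_eq_left (by linarith)
        have h1' : x - τ ≤ max (x - τ) 0 := le_max_left _ _
        simp [pinLoss, hs, indicator_of_mem (mem_Iio.2 hτ), h0]
        nlinarith
      · have h0 : max (x₀ - τ) 0 = 0 := max_eq_right (by push_neg at hτ; linarith)
        have h1' : 0 ≤ max (x - τ) 0 := le_max_right _ _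
        simp [pinLoss, hs, indicator_of_notMem (fun h => hτ (mem_Iio.1 h)), h0]
        nlinarith
    have hmono : ∫ τ, ((x - x₀) * s.indicator (fun _ => (1:ℝ)) τ - q * (x - x₀)
        + pinLoss q x₀ τ) ∂G ≤ ∫ τ, pinLoss q x τ ∂G :=
      integral_mono (hind.add hI0) hI hpt
    rw [integral_add hind hI0, integral_sub (((integrable_const (1:ℝ)).indicator hms).const_mul _)
      (integrable_const _), integral_const_mul, integral_indicator_const (1:ℝ) hms,
      integral_const] at hmono
    simp only [measure_univ, ENNReal.toReal_one, smul_eq_mul, one_smul, mul_one, probReal_univ,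
      measureReal_def] at hmono
    have hlio : (G (Iio x₀)).toReal ≤ q := prob_Iio_le G q x₀ h2
    nlinarith

lemma Sint_eq (α : ℝ) (hα : α ≠ 0) (ℓ u τ : ℝ) :
    Sint α ℓ u τ = (2 / α) * (pinLoss (α / 2) ℓ τ + pinLoss (1 - α / 2) u τ) := by
  have h2 : (2 / α) * (α / 2) = 1 := by field_simp
  have key : ∀ a b : ℝ, (a - b) * (if b < a then (1:ℝ) else 0) = max (a - b) 0 := by
    intro a b
    rcases lt_or_ge b a with h | h
    · simp [h, max_eq_left (by linarith : (0:ℝ) ≤ a - b)]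
    · rw [if_neg (not_lt.2 h), mul_zero, max_eq_right (by linarith : a - b ≤ 0)]
  have hmax : max (τ - u) 0 = max (u - τ) 0 - (u - τ) := by
    rcases le_total τ u with h | h
    · rw [max_eq_right (by linarith), max_eq_left (by linarith)]; ring
    · rw [max_eq_left (by linarith), max_eq_right (by linarith)]; ring
  have e1 : Sint α ℓ u τ = (u - ℓ) + (2/α) * max (ℓ - τ) 0 + (2/α) * max (τ - u) 0 := by
    unfold Sint
    rw [mul_assoc, mul_assoc, key ℓ τ, key τ u]
  rw [e1, hmax]
  unfold pinLoss
  field_simp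
  ring

lemma integrable_Sint (G : Measure ℝ) [IsFiniteMeasure G] (hid : Integrable id G)
    (α : ℝ) (hα : α ≠ 0) (ℓ u : ℝ) : Integrable (fun τ => Sint α ℓ u τ) G := by
  have : (fun τ => Sint α ℓ u τ)
      = fun τ => (2 / α) * (pinLoss (α / 2) ℓ τ + pinLoss (1 - α / 2) u τ) := by
    ext τ; exact Sint_eq α hα ℓ u τ
  rw [this]
  exact (((integrable_pinLoss G hid _ ℓ).add (integrable_pinLoss G hid _ u)).const_mul _)

lemma integral_Sint_le (G₀ : Measure ℝ) [IsProbabilityMeasure G₀] (hid : Integrable id G₀)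
    (α : ℝ) (hα : 0 < α) (ℓ u ℓ₀ u₀ : ℝ)
    (hℓ₀ : IsQuantile G₀ (α / 2) ℓ₀) (hu₀ : IsQuantile G₀ (1 - α / 2) u₀) :
    ∫ τ, Sint α ℓ₀ u₀ τ ∂G₀ ≤ ∫ τ, Sint α ℓ u τ ∂G₀ := by
  have hα' : α ≠ 0 := ne_of_gt hα
  have e : ∀ a b : ℝ, ∫ τ, Sint α a b τ ∂G₀
      = (2/α) * ((∫ τ, pinLoss (α/2) a τ ∂G₀) + ∫ τ, pinLoss (1 - α/2) b τ ∂G₀) := by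
    intro a b
    simp_rw [Sint_eq α hα' a b]
    rw [integral_const_mul, integral_add (integrable_pinLoss G₀ hid _ a)
      (integrable_pinLoss G₀ hid _ b)]
  rw [e, e]
  have p1 := pinball_le G₀ hid (α/2) ℓ ℓ₀ hℓ₀
  have p2 := pinball_le G₀ hid (1 - α/2) u u₀ hu₀
  have h2α : 0 ≤ 2/α := by positivity
  exact mul_le_mul_of_nonneg_left (by linarith) h2α

lemma integral_sq_le (G₀ : Measure ℝ) [IsProbabilityMeasure G₀] (hG₀ : MemLp id 2 G₀)
    (m : ℝ) : ∫ τ, ((∫ t, t ∂G₀) - τ)^2 ∂G₀ ≤ ∫ τ, (m - τ)^2 ∂G₀ := by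
  set m₀ : ℝ := ∫ t, t ∂G₀ with hm₀
  have hid : Integrable id G₀ := hG₀.integrable one_le_two
  have hsq : ∀ c : ℝ, Integrable (fun τ => (c - τ)^2) G₀ := by
    intro c
    have : MemLp (fun τ => c - τ) 2 G₀ := (memLp_const c).sub hG₀
    exact this.integrable_sq
  have key : ∫ τ, ((m - τ)^2 - (m₀ - τ)^2) ∂G₀ = (m - m₀)^2 := by
    have hpt : ∀ τ : ℝ, (m - τ)^2 - (m₀ - τ)^2 = (m^2 - m₀^2) - 2*(m - m₀)*τ := by
      intro τ; ring
    simp_rw [hpt]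
    have hid' : Integrable (fun a : ℝ => a) G₀ := hid
    rw [integral_sub (integrable_const _) ((hid'.const_mul _)), integral_const,
      integral_const_mul]
    simp only [measure_univ, ENNReal.toReal_one, one_smul, probReal_univ]
    have : ∫ a : ℝ, a ∂G₀ = m₀ := rfl
    rw [this]
    ring
  have := integral_sub (hsq m) (hsq m₀)
  have hd : ∫ τ, (m - τ)^2 ∂G₀ - ∫ τ, (m₀ - τ)^2 ∂G₀ = (m - m₀)^2 := by
    rw [← key, ← this]
  nlinarith [sq_nonneg (m - m₀), hd]

/-- Propriety of the combined score: the expected score under the true distribution `G₀`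
is minimised by reporting the mean and central quantiles of `G₀`. -/
theorem stmt0 (α : ℝ) (hα : α ∈ Ioo (0 : ℝ) 1)
    (G₀ G : Measure ℝ) [IsProbabilityMeasure G₀] [IsProbabilityMeasure G]
    (hG₀ : MemLp id 2 G₀) (hG : MemLp id 2 G)
    (ℓ u ℓ₀ u₀ : ℝ)
    (hℓ : IsQuantile G (α / 2) ℓ) (hu : IsQuantile G (1 - α / 2) u)
    (hℓ₀ : IsQuantile G₀ (α / 2) ℓ₀) (hu₀ : IsQuantile G₀ (1 - α / 2) u₀) :
    (∫ τ, (((∫ t, t ∂G₀) - τ) ^ 2 + Sint α ℓ₀ u₀ τ) ∂G₀)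
      ≤ ∫ τ, (((∫ t, t ∂G) - τ) ^ 2 + Sint α ℓ u τ) ∂G₀ := by
  have hα0 : 0 < α := hα.1
  have hα' : α ≠ 0 := ne_of_gt hα0
  have hid : Integrable id G₀ := hG₀.integrable one_le_two
  have hsq : ∀ c : ℝ, Integrable (fun τ => (c - τ)^2) G₀ := by
    intro c
    have : MemLp (fun τ => c - τ) 2 G₀ := (memLp_const c).sub hG₀
    exact this.integrable_sq
  have hS : ∀ a b : ℝ, Integrable (fun τ => Sint α a b τ) G₀ :=
    fun a b => integrable_Sint G₀ hid α hα' a b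
  rw [integral_add (hsq _) (hS ℓ₀ u₀), integral_add (hsq _) (hS ℓ u)]
  have h1 := integral_sq_le G₀ hG₀ (∫ t, t ∂G)
  have h2 := integral_Sint_le G₀ hid α hα0 ℓ u ℓ₀ u₀ hℓ₀ hu₀
  linarith
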